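/- Two permutations π, σ ∈ S_n have the same skeleton (i.e., π⁻¹ · s(π) = σ⁻¹ · s(σ) as group elements of S_n) if and only if they lie in the same orbit of the polyurethane group 𝒫_n acting on S_n. -/

import Mathlib

/-- `l` is a permutation of `{1, …, n}`, written as a word. -/
def IsPermList (n : ℕ) (l : List ℕ) : Prop := l.Perm (List.range' 1 n)

/-- The word obtained from `l` by exchanging the positions of the entries `i` and `i+1`. -/
def swapEntries (i : ℕ) (l : List ℕ) : List ℕ :=
  l.map fun x => if x = i then i + 1 else if x = i + 1 then i else x

/-- Some entry larger than `i+1` appears (strictly) between the entries `i` and `i+1`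
in the word `l`. -/
def ToggleApplies (i : ℕ) (l : List ℕ) : Prop :=
  ∃ a ∈ l, i + 1 < a ∧
    min (l.idxOf i) (l.idxOf (i + 1)) < l.idxOf a ∧
    l.idxOf a < max (l.idxOf i) (l.idxOf (i + 1))

open scoped Classical in
/-- The polyurethane toggle `p i`. -/
noncomputable def toggle (i : ℕ) (l : List ℕ) : List ℕ :=
  if ToggleApplies i l then swapEntries i l else l

lemma max_getD_mem (l : List ℕ) (h : l ≠ []) : l.max?.getD 0 ∈ l := by
  rcases hm : l.max? with _ | m'
  · exact absurd (List.max?_eq_none_iff.mp hm) h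
  · simpa using List.max?_mem hm

lemma length_takeWhile_lt (p : ℕ → Bool) (l : List ℕ) (x : ℕ) (hx : x ∈ l) (hpx : p x = false) :
    (l.takeWhile p).length < l.length := by
  rcases Nat.lt_or_ge (l.takeWhile p).length l.length with h | h
  · exact h
  · have := List.takeWhile_eq_self_iff.mp ((List.takeWhile_sublist p).eq_of_length_le h) x hx
    rw [hpx] at this; exact absurd this (by simp)

lemma length_dropWhile_tail_lt (p : ℕ → Bool) (l : List ℕ) (h : l ≠ []) :
    ((l.dropWhile p).tail).length < l.length := by
  have h1 : (l.dropWhile p).length ≤ l.length := (List.dropWhile_sublist _).length_le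
  have h2 : ((l.dropWhile p).tail).length ≤ (l.dropWhile p).length - 1 := by
    simp [List.length_tail]
  have : 0 < l.length := List.length_pos_iff.mpr h
  omega

/-- West's stack-sorting map `s`: `s([]) = []` and `s(LmR) = s(L) s(R) m`,
where `m` is the largest entry. -/
def stackSort : List ℕ → List ℕ
  | [] => []
  | a :: rest =>
    stackSort ((a :: rest).takeWhile (· ≠ (a :: rest).max?.getD 0)) ++
      stackSort (((a :: rest).dropWhile (· ≠ (a :: rest).max?.getD 0)).tail) ++
      [(a :: rest).max?.getD 0]
termination_by l => l.length
decreasing_by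
  · exact length_takeWhile_lt _ _ _ (max_getD_mem (a :: rest) (by simp)) (by simp)
  · exact length_dropWhile_tail_lt _ _ (by simp)

/-- The inverse of the permutation `l` of `{1, …, n}`, as a word: its `k`-th entry is the
position (1-indexed) of the entry `k` in `l`. -/
def invw (l : List ℕ) : List ℕ := (List.range' 1 l.length).map fun k => l.idxOf k + 1

/-- The composition `l · m` of permutations written as words: `(l · m) j = l (m j)`. -/
def compw (l m : List ℕ) : List ℕ := m.map fun k => l.getD (k - 1) 0

/-- The group element `π⁻¹ · s(π)`, which encodes the skeleton of `π`: two permutations of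
`{1, …, n}` have the same skeleton if and only if their `skel`s coincide. -/
def skel (l : List ℕ) : List ℕ := compw (invw l) (stackSort l)

/-- One application of a polyurethane toggle `p i`, `i ∈ [n-1]`. -/
def ToggleStep (n : ℕ) (x y : List ℕ) : Prop :=
  ∃ i, 1 ≤ i ∧ i ≤ n - 1 ∧ y = toggle i x

/-- `x` and `y` lie in the same orbit of the polyurethane group
`𝒫ₙ = ⟨p₁, …, p_{n-1}⟩` acting on permutations. -/
def OrbitRel (n : ℕ) : List ℕ → List ℕ → Prop := Relation.EqvGen (ToggleStep n)

namespace PU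

lemma le_maxD {l : List ℕ} {x : ℕ} (hx : x ∈ l) : x ≤ l.max?.getD 0 := by
  rcases hm : l.max? with _ | m
  · rw [List.max?_eq_none_iff] at hm; simp [hm] at hx
  · simpa using ((List.max?_le_iff hm).mp le_rfl) x hx

lemma split_maxD (l : List ℕ) (h : l ≠ []) :
    l = l.takeWhile (· ≠ l.max?.getD 0) ++
        l.max?.getD 0 :: (l.dropWhile (· ≠ l.max?.getD 0)).tail := by
  set M := l.max?.getD 0 with hM
  have hmem : M ∈ l := max_getD_mem l h
  have hne : l.dropWhile (· ≠ M) ≠ [] := by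
    intro hc
    have := List.takeWhile_append_dropWhile (p := fun x => decide (x ≠ M)) (l := l)
    rw [hc, List.append_nil] at this
    have := List.takeWhile_eq_self_iff.mp this M hmem
    simp at this
  have hd : l.dropWhile (· ≠ M) = M :: (l.dropWhile (· ≠ M)).tail := by
    have hhead : (l.dropWhile (· ≠ M)).head hne = M := by
      have := List.head_dropWhile_not (fun x => decide (x ≠ M)) hne
      simpa using this
    exact ((List.cons_head_tail hne).symm).trans (by rw [hhead])
  conv_lhs => rw [← List.takeWhile_append_dropWhile (p := fun x => decide (x ≠ M)) (l := l)]
  rw [← hd]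

end PU
namespace PU

/-- left part of the split at the maximum -/
def lT (l : List ℕ) : List ℕ := l.takeWhile (· ≠ l.max?.getD 0)
/-- right part of the split at the maximum -/
def lD (l : List ℕ) : List ℕ := (l.dropWhile (· ≠ l.max?.getD 0)).tail

lemma split_eq (l : List ℕ) (h : l ≠ []) : l = lT l ++ l.max?.getD 0 :: lD l :=
  split_maxD l h

lemma lT_length_lt (l : List ℕ) (h : l ≠ []) : (lT l).length < l.length :=
  length_takeWhile_lt _ _ _ (max_getD_mem l h) (by simp)

lemma lD_length_lt (l : List ℕ) (h : l ≠ []) : (lD l).length < l.length :=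
  length_dropWhile_tail_lt _ _ h

lemma lT_sublist (l : List ℕ) : List.Sublist (lT l) l := List.takeWhile_sublist _

lemma lD_sublist (l : List ℕ) : List.Sublist (lD l) l :=
  (List.tail_sublist _).trans (List.dropWhile_sublist _)

/-- the shape of the decreasing binary plane tree of a word -/
inductive BT : Type
  | leaf : BT
  | node : BT → BT → BT
deriving DecidableEq

def BT.size : BT → ℕ
  | .leaf => 0
  | .node L R => L.size + R.size + 1

def shape : List ℕ → BT
  | [] => .leaf
  | a :: rest => .node (shape (lT (a :: rest))) (shape (lD (a :: rest)))
termination_by l => l.length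
decreasing_by
  · exact lT_length_lt _ (by simp)
  · exact lD_length_lt _ (by simp)

lemma shape_nil : shape [] = .leaf := by rw [shape]

lemma shape_eq (l : List ℕ) (h : l ≠ []) : shape l = .node (shape (lT l)) (shape (lD l)) := by
  cases l with
  | nil => exact absurd rfl h
  | cons a rest => rw [shape]

lemma stackSort_eq (l : List ℕ) (h : l ≠ []) :
    stackSort l = stackSort (lT l) ++ stackSort (lD l) ++ [l.max?.getD 0] := by
  cases l with
  | nil => exact absurd rfl h
  | cons a rest => rw [stackSort]; rfl

lemma stackSort_perm (l : List ℕ) : List.Perm (stackSort l) l := by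
  by_cases h : l = []
  · subst h; rw [stackSort]
  · have h1 := stackSort_perm (lT l)
    have h2 := stackSort_perm (lD l)
    rw [stackSort_eq l h]
    conv_rhs => rw [split_eq l h]
    rw [List.append_assoc]
    exact (h1.append (h2.append_right _)).trans
      ((List.perm_append_singleton _ _).append_left _)
termination_by l.length
decreasing_by exacts [lT_length_lt l h, lD_length_lt l h]

lemma size_shape (l : List ℕ) : (shape l).size = l.length := by
  by_cases h : l = []
  · subst h; rw [shape_nil]; rfl
  · rw [shape_eq l h, BT.size, size_shape (lT l), size_shape (lD l)]
    conv_rhs => rw [split_eq l h]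
    simp
    omega
termination_by l.length
decreasing_by exacts [lT_length_lt l h, lD_length_lt l h]

lemma mem_stackSort {l : List ℕ} {x : ℕ} : x ∈ stackSort l ↔ x ∈ l :=
  (stackSort_perm l).mem_iff

lemma maxD_not_mem_lT (l : List ℕ) : l.max?.getD 0 ∉ lT l := by
  intro hc
  have := List.mem_takeWhile_imp hc
  simp at this

lemma nodup_parts {l : List ℕ} (h : l ≠ []) (hnd : l.Nodup) :
    l.max?.getD 0 ∉ lD l ∧ List.Disjoint (lT l) (lD l) := by
  have hh := hnd
  rw [split_eq l h, List.nodup_append] at hh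
  obtain ⟨h1, h2, h3⟩ := hh
  rw [List.nodup_cons] at h2
  exact ⟨h2.1, fun x hx hx' => h3 x hx x (List.mem_cons_of_mem _ hx') rfl⟩

lemma lt_maxD_of_mem_lT {l : List ℕ} {x : ℕ} (hx : x ∈ lT l) : x < l.max?.getD 0 := by
  have h1 : x ≠ l.max?.getD 0 := by simpa using List.mem_takeWhile_imp hx
  exact lt_of_le_of_ne (le_maxD ((lT_sublist l).subset hx)) h1

lemma lt_maxD_of_mem_lD {l : List ℕ} {x : ℕ} (h : l ≠ []) (hnd : l.Nodup) (hx : x ∈ lD l) :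
    x < l.max?.getD 0 := by
  have h1 : x ≠ l.max?.getD 0 := fun hc => (nodup_parts h hnd).1 (hc ▸ hx)
  exact lt_of_le_of_ne (le_maxD ((lD_sublist l).subset hx)) h1

end PU
namespace PU

lemma idx_lT {l : List ℕ} {x : ℕ} (h : l ≠ []) (hx : x ∈ lT l) :
    l.idxOf x = (lT l).idxOf x := by
  conv_lhs => rw [split_eq l h]
  exact List.idxOf_append_of_mem hx

lemma idx_maxD {l : List ℕ} (h : l ≠ []) :
    l.idxOf (l.max?.getD 0) = (lT l).length := by
  set M := l.max?.getD 0 with hM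
  conv_lhs => rw [split_eq l h]
  rw [List.idxOf_append_of_notMem (maxD_not_mem_lT l), List.idxOf_cons_self]; omega

lemma idx_lD {l : List ℕ} {x : ℕ} (h : l ≠ []) (hnd : l.Nodup) (hx : x ∈ lD l) :
    l.idxOf x = (lT l).length + 1 + (lD l).idxOf x := by
  obtain ⟨hM, hdisj⟩ := nodup_parts h hnd
  have hxT : x ∉ lT l := fun hc => hdisj hc hx
  have hxM : x ≠ l.max?.getD 0 := fun hc => hM (hc ▸ hx)
  conv_lhs => rw [split_eq l h]
  rw [List.idxOf_append_of_notMem hxT, List.idxOf_cons_ne _ (Ne.symm hxM)]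
  omega

lemma length_of_perm {n : ℕ} {l : List ℕ} (hl : IsPermList n l) : l.length = n := by
  simpa using hl.length_eq

lemma mem_iff_of_perm {n : ℕ} {l : List ℕ} (hl : IsPermList n l) {x : ℕ} :
    x ∈ l ↔ (1 ≤ x ∧ x ≤ n) := by
  rw [hl.mem_iff, List.mem_range'_1]
  omega

lemma nodup_of_perm {n : ℕ} {l : List ℕ} (hl : IsPermList n l) : l.Nodup :=
  hl.nodup_iff.mpr (by simp [List.nodup_range'])

lemma skel_map {n : ℕ} {l : List ℕ} (hl : IsPermList n l) :
    skel l = (stackSort l).map (fun k => l.idxOf k + 1) := by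
  rw [skel, compw]
  refine List.map_congr_left fun k hk => ?_
  have hkl : k ∈ l := mem_stackSort.mp hk
  have hkn : 1 ≤ k ∧ k ≤ n := (mem_iff_of_perm hl).mp hkl
  have hlen : (invw l).length = n := by
    rw [invw, List.length_map, List.length_range', length_of_perm hl]
  have hlt : k - 1 < (invw l).length := by omega
  rw [List.getD_eq_getElem _ _ hlt]
  simp only [invw, List.getElem_map, List.getElem_range']
  congr 2
  omega

/-- in-order positions (1-indexed) listed in post-order; depends only on the shape -/
def po : BT → List ℕ
  | .leaf => []
  | .node L R => po L ++ (po R).map (· + (L.size + 1)) ++ [L.size + 1]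

lemma po_length (T : BT) : (po T).length = T.size := by
  induction T with
  | leaf => rfl
  | node L R ih1 ih2 => simp [po, BT.size, ih1, ih2]; omega

lemma po_injective : ∀ T1 T2 : BT, po T1 = po T2 → T1 = T2 := by
  intro T1
  induction T1 with
  | leaf =>
    intro T2 h
    cases T2 with
    | leaf => rfl
    | node L R => simp [po] at h
  | node L R ih1 ih2 =>
    intro T2 h
    cases T2 with
    | leaf => simp [po] at h
    | node L' R' =>
      simp only [po] at h
      have hlast : L.size + 1 = L'.size + 1 := by
        have := congrArg List.getLast? h
        simpa using this
      have hL : L.size = L'.size := by omega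
      have hlen1 : (po L).length = (po L').length := by rw [po_length, po_length, hL]
      rw [List.append_assoc, List.append_assoc] at h
      obtain ⟨h1, h2⟩ := List.append_inj h hlen1
      have h3 : (po R).map (· + (L.size + 1)) = (po R').map (· + (L.size + 1)) := by
        rw [hlast] at h2 ⊢
        exact (List.append_inj' h2 rfl).1
      have h4 : po R = po R' :=
        List.map_injective_iff.mpr (fun a b hab => by omega) h3
      rw [ih1 _ h1, ih2 _ h4]

/-- `skel` as the position word of the post-order traversal -/
lemma stackSort_po (l : List ℕ) (hnd : l.Nodup) :
    (stackSort l).map (fun k => l.idxOf k + 1) = po (shape l) := by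
  by_cases h : l = []
  · subst h; rw [stackSort, shape_nil, po]; rfl
  · have hndT : (lT l).Nodup := (lT_sublist l).nodup hnd
    have hndD : (lD l).Nodup := (lD_sublist l).nodup hnd
    have ihT := stackSort_po (lT l) hndT
    have ihD := stackSort_po (lD l) hndD
    rw [stackSort_eq l h, shape_eq l h, po, ← ihT, ← ihD, size_shape]
    rw [List.map_append, List.map_append, List.map_map]
    congr 1
    congr 1
    · refine List.map_congr_left fun k hk => ?_
      exact congrArg (· + 1) (idx_lT h (mem_stackSort.mp hk))
    · refine List.map_congr_left fun k hk => ?_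
      have := idx_lD h hnd (mem_stackSort.mp hk)
      simp only [Function.comp_apply]
      omega
    · simp [idx_maxD h]
termination_by l.length
decreasing_by exacts [lT_length_lt _ h, lD_length_lt _ h]

lemma skel_eq_po {n : ℕ} {l : List ℕ} (hl : IsPermList n l) : skel l = po (shape l) := by
  rw [skel_map hl, stackSort_po l (nodup_of_perm hl)]

lemma skel_eq_iff_shape_eq {n : ℕ} {l m : List ℕ} (hl : IsPermList n l) (hm : IsPermList n m) :
    skel l = skel m ↔ shape l = shape m := by
  rw [skel_eq_po hl, skel_eq_po hm]
  exact ⟨fun h => po_injective _ _ h, fun h => by rw [h]⟩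

end PU
namespace PU

lemma maxD_eq {l : List ℕ} {b : ℕ} (hb : b ∈ l) (hall : ∀ x ∈ l, x ≤ b) :
    l.max?.getD 0 = b := by
  have h1 := le_maxD hb
  have h2 := hall _ (max_getD_mem l (by rintro rfl; simp at hb))
  omega

lemma takeWhile_congr' {p q : ℕ → Bool} : ∀ (l : List ℕ), (∀ x ∈ l, p x = q x) →
    l.takeWhile p = l.takeWhile q
  | [], _ => rfl
  | a :: l, h => by
    rw [List.takeWhile_cons, List.takeWhile_cons, h a (by simp)]
    split
    · rw [takeWhile_congr' l (fun x hx => h x (by simp [hx]))]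
    · rfl

lemma dropWhile_congr' {p q : ℕ → Bool} : ∀ (l : List ℕ), (∀ x ∈ l, p x = q x) →
    l.dropWhile p = l.dropWhile q
  | [], _ => rfl
  | a :: l, h => by
    rw [List.dropWhile_cons, List.dropWhile_cons, h a (by simp)]
    split
    · exact dropWhile_congr' l (fun x hx => h x (by simp [hx]))
    · rfl

lemma shape_map (f : ℕ → ℕ) (l : List ℕ)
    (hmono : ∀ x ∈ l, ∀ y ∈ l, x < y → f x < f y) :
    shape (l.map f) = shape l := by
  by_cases h : l = []
  · subst h; rfl
  · have hne : l.map f ≠ [] := by simpa using h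
    set M := l.max?.getD 0 with hM
    have hMmem : M ∈ l := max_getD_mem l h
    have hfM : (l.map f).max?.getD 0 = f M := by
      refine maxD_eq (List.mem_map_of_mem (f := f) hMmem) ?_
      rintro z hz
      obtain ⟨x, hx, rfl⟩ := List.mem_map.mp hz
      rcases lt_or_eq_of_le (le_maxD hx : x ≤ M) with hlt | rfl
      · exact le_of_lt (hmono x hx M hMmem hlt)
      · exact le_rfl
    have hiff : ∀ x ∈ l, (decide (f x ≠ f M)) = (decide (x ≠ M)) := by
      intro x hx
      rcases lt_trichotomy x M with h1 | h1 | h1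
      · simp [ne_of_lt (hmono x hx M hMmem h1), ne_of_lt h1]
      · simp [h1]
      · simp [(ne_of_lt (hmono M hMmem x hx h1)).symm, (ne_of_lt h1).symm]
    have hlT : lT (l.map f) = (lT l).map f := by
      rw [lT, hfM, List.takeWhile_map, lT]
      congr 1
      exact takeWhile_congr' l hiff
    have hlD : lD (l.map f) = (lD l).map f := by
      rw [lD, hfM, List.dropWhile_map, lD, ← List.map_tail]
      congr 2
      exact dropWhile_congr' l hiff
    rw [shape_eq _ hne, shape_eq l h, hlT, hlD,
      shape_map f (lT l) (fun x hx y hy => hmono x ((lT_sublist l).subset hx) y ((lT_sublist l).subset hy)),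
      shape_map f (lD l) (fun x hx y hy => hmono x ((lD_sublist l).subset hx) y ((lD_sublist l).subset hy))]
termination_by l.length
decreasing_by exacts [lT_length_lt _ h, lD_length_lt _ h]

/-- the function underlying `swapEntries` -/
def sfun (i : ℕ) : ℕ → ℕ := fun x => if x = i then i + 1 else if x = i + 1 then i else x

lemma swapEntries_eq_map (i : ℕ) (l : List ℕ) : swapEntries i l = l.map (sfun i) := rfl

lemma sfun_invol (i x : ℕ) : sfun i (sfun i x) = x := by
  simp only [sfun]; split_ifs <;> omega

lemma sfun_inj (i : ℕ) : Function.Injective (sfun i) := by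
  intro x y h
  have := congrArg (sfun i) h
  rwa [sfun_invol, sfun_invol] at this

lemma shape_map_not1 {i : ℕ} (l : List ℕ) (h : i + 1 ∉ l) :
    shape (l.map (sfun i)) = shape l := by
  refine shape_map _ _ (fun x hx y hy hlt => ?_)
  have hx1 : x ≠ i + 1 := fun hc => h (hc ▸ hx)
  have hy1 : y ≠ i + 1 := fun hc => h (hc ▸ hy)
  simp only [sfun]; split_ifs <;> omega

lemma shape_map_not0 {i : ℕ} (l : List ℕ) (h : i ∉ l) :
    shape (l.map (sfun i)) = shape l := by
  refine shape_map _ _ (fun x hx y hy hlt => ?_)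
  have hx1 : x ≠ i := fun hc => h (hc ▸ hx)
  have hy1 : y ≠ i := fun hc => h (hc ▸ hy)
  simp only [sfun]; split_ifs <;> omega

end PU
namespace PU

lemma mem_cases {l : List ℕ} (h : l ≠ []) {x : ℕ} (hx : x ∈ l) :
    x ∈ lT l ∨ x = l.max?.getD 0 ∨ x ∈ lD l := by
  rw [split_eq l h] at hx
  simpa using hx

lemma mem_lT_of_idx {l : List ℕ} {a : ℕ} (h : l ≠ []) (hnd : l.Nodup) (ha : a ∈ l)
    (hlt : l.idxOf a < (lT l).length) : a ∈ lT l := by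
  rcases mem_cases h ha with h1 | rfl | h1
  · exact h1
  · rw [idx_maxD h] at hlt; omega
  · rw [idx_lD h hnd h1] at hlt; omega

lemma mem_lD_of_idx {l : List ℕ} {a : ℕ} (h : l ≠ []) (hnd : l.Nodup) (ha : a ∈ l)
    (hgt : (lT l).length < l.idxOf a) : a ∈ lD l := by
  rcases mem_cases h ha with h1 | rfl | h1
  · rw [idx_lT h h1] at hgt
    have := List.idxOf_lt_length_iff.mpr h1
    omega
  · rw [idx_maxD h] at hgt; omega
  · exact h1

lemma shape_swapEntries {i : ℕ} {l : List ℕ} (hnd : l.Nodup) (hi : i ∈ l) (hi1 : i + 1 ∈ l)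
    (hta : ToggleApplies i l) : shape (swapEntries i l) = shape l := by
  have h : l ≠ [] := List.ne_nil_of_mem hi
  have hne : l.map (sfun i) ≠ [] := by simpa using h
  set M := l.max?.getD 0 with hM
  obtain ⟨a, ha, hai, hmin, hmax⟩ := hta
  have haM : a ≤ M := le_maxD ha
  have hi1M : i + 1 < M := lt_of_lt_of_le hai haM
  have hMi : M ≠ i := by omega
  have hMi1 : M ≠ i + 1 := by omega
  have hσM : sfun i M = M := by simp only [sfun]; split_ifs <;> omega
  have hmax' : (l.map (sfun i)).max?.getD 0 = M := by
    refine maxD_eq (hσM ▸ List.mem_map_of_mem (f := sfun i) (max_getD_mem l h)) ?_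
    rintro z hz
    obtain ⟨x, hx, rfl⟩ := List.mem_map.mp hz
    have hxM : x ≤ M := le_maxD hx
    simp only [sfun]; split_ifs <;> omega
  have hiffM : ∀ x ∈ l, decide (sfun i x ≠ M) = decide (x ≠ M) := by
    intro x _
    have : sfun i x = M ↔ x = M := by
      constructor
      · intro hc; exact sfun_inj i (hc.trans hσM.symm)
      · rintro rfl; exact hσM
    simp only [decide_eq_decide]
    exact not_congr this
  have hlT : lT (l.map (sfun i)) = (lT l).map (sfun i) := by
    rw [lT, hmax', List.takeWhile_map, lT, ← hM]
    congr 1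
    exact takeWhile_congr' l hiffM
  have hlD : lD (l.map (sfun i)) = (lD l).map (sfun i) := by
    rw [lD, hmax', List.dropWhile_map, ← List.map_tail, lD, ← hM]
    congr 2
    exact dropWhile_congr' l hiffM
  obtain ⟨hMD, hdisj⟩ := nodup_parts h hnd
  have hMT := maxD_not_mem_lT l
  rw [swapEntries_eq_map, shape_eq _ hne, shape_eq l h, hlT, hlD]
  have hidxa : l.idxOf a < l.length := List.idxOf_lt_length_iff.mpr ha
  rcases mem_cases h hi with hiT | hieq | hiD
  · rcases mem_cases h hi1 with hi1T | hi1eq | hi1D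
    · -- both in lT
      have e1 : l.idxOf i = (lT l).idxOf i := idx_lT h hiT
      have e2 : l.idxOf (i+1) = (lT l).idxOf (i+1) := idx_lT h hi1T
      have b1 : (lT l).idxOf i < (lT l).length := List.idxOf_lt_length_iff.mpr hiT
      have b2 : (lT l).idxOf (i+1) < (lT l).length := List.idxOf_lt_length_iff.mpr hi1T
      have haT : a ∈ lT l := mem_lT_of_idx h hnd ha (by omega)
      have e3 : l.idxOf a = (lT l).idxOf a := idx_lT h haT
      have hTA : ToggleApplies i (lT l) := ⟨a, haT, hai, by omega, by omega⟩
      rw [← swapEntries_eq_map, shape_swapEntries ((lT_sublist l).nodup hnd) hiT hi1T hTA,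
        shape_map_not1 (lD l) (fun hc => hdisj hi1T hc)]
    · exact absurd hi1eq (Ne.symm hMi1)
    · -- i in lT, i+1 in lD
      rw [shape_map_not1 (lT l) (fun hc => hdisj hc hi1D),
        shape_map_not0 (lD l) (fun hc => hdisj hiT hc)]
  · exact absurd hieq (Ne.symm hMi)
  · rcases mem_cases h hi1 with hi1T | hi1eq | hi1D
    · -- i in lD, i+1 in lT
      rw [shape_map_not0 (lT l) (fun hc => hdisj hc hiD),
        shape_map_not1 (lD l) (fun hc => hdisj hi1T hc)]
    · exact absurd hi1eq (Ne.symm hMi1)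
    · -- both in lD
      have e1 : l.idxOf i = (lT l).length + 1 + (lD l).idxOf i := idx_lD h hnd hiD
      have e2 : l.idxOf (i+1) = (lT l).length + 1 + (lD l).idxOf (i+1) := idx_lD h hnd hi1D
      have haD : a ∈ lD l := mem_lD_of_idx h hnd ha (by omega)
      have e3 : l.idxOf a = (lT l).length + 1 + (lD l).idxOf a := idx_lD h hnd haD
      have hTA : ToggleApplies i (lD l) := ⟨a, haD, hai, by omega, by omega⟩
      rw [shape_map_not1 (lT l) (fun hc => hdisj hc hi1D)]
      rw [← swapEntries_eq_map, shape_swapEntries ((lD_sublist l).nodup hnd) hiD hi1D hTA]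
termination_by l.length
decreasing_by exacts [lT_length_lt _ h, lD_length_lt _ h]

end PU
namespace PU

lemma swap_swap (i : ℕ) (l : List ℕ) : swapEntries i (swapEntries i l) = l := by
  rw [swapEntries_eq_map, swapEntries_eq_map, List.map_map]
  conv_rhs => rw [← List.map_id l]
  exact List.map_congr_left fun x _ => sfun_invol i x

lemma isPerm_swap {n i : ℕ} (h1 : 1 ≤ i) (h2 : i + 1 ≤ n) {x : List ℕ}
    (hx : IsPermList n x) : IsPermList n (swapEntries i x) := by
  rw [IsPermList, swapEntries_eq_map]
  refine (hx.map (sfun i)).trans ?_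
  have hnd : (List.range' 1 n).Nodup := by simp [List.nodup_range']
  refine (List.perm_ext_iff_of_nodup (hnd.map (sfun_inj i)) hnd).mpr fun z => ?_
  simp only [List.mem_map, List.mem_range'_1]
  constructor
  · rintro ⟨w, hw, rfl⟩
    simp only [sfun]; split_ifs <;> omega
  · intro hz
    refine ⟨sfun i z, ?_, sfun_invol i z⟩
    simp only [sfun]; split_ifs <;> omega

lemma mem_of_perm {n i : ℕ} {x : List ℕ} (hx : IsPermList n x) (h1 : 1 ≤ i) (h2 : i ≤ n) :
    i ∈ x := (mem_iff_of_perm hx).mpr ⟨h1, h2⟩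

lemma toggleStep_perm_shape {n : ℕ} {x y : List ℕ} (hs : ToggleStep n x y) :
    (IsPermList n x ↔ IsPermList n y) ∧ (IsPermList n x → shape x = shape y) := by
  obtain ⟨i, hi1, hi2, rfl⟩ := hs
  rw [toggle]
  split
  · rename_i hta
    have hn : 1 ≤ n := by omega
    have h2 : i + 1 ≤ n := by omega
    constructor
    · constructor
      · exact fun hx => isPerm_swap hi1 h2 hx
      · intro hy
        have := isPerm_swap hi1 h2 hy
        rwa [swap_swap] at this
    · intro hx
      exact (shape_swapEntries (nodup_of_perm hx) (mem_of_perm hx hi1 (by omega))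
        (mem_of_perm hx (by omega) h2) hta).symm ▸ rfl
  · exact ⟨Iff.rfl, fun _ => rfl⟩

lemma orbit_perm_shape {n : ℕ} {x y : List ℕ} (h : OrbitRel n x y) :
    (IsPermList n x ↔ IsPermList n y) ∧ (IsPermList n x → shape x = shape y) := by
  induction h with
  | rel a b hab => exact toggleStep_perm_shape hab
  | refl a => exact ⟨Iff.rfl, fun _ => rfl⟩
  | symm a b hab ih =>
    exact ⟨ih.1.symm, fun hb => (ih.2 (ih.1.mpr hb)).symm⟩
  | trans a b c hab hbc ih1 ih2 =>
    exact ⟨ih1.1.trans ih2.1, fun ha => (ih1.2 ha).trans (ih2.2 (ih1.1.mp ha))⟩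

end PU
namespace PU

/-- position `p` dominates the whole interval between positions `p` and `q` -/
def Anc (w : List ℕ) (p q : ℕ) : Prop :=
  ∀ r, min p q ≤ r → r ≤ max p q → w.getD r 0 ≤ w.getD p 0

lemma length_split (w : List ℕ) (h : w ≠ []) :
    w.length = (lT w).length + 1 + (lD w).length := by
  conv_lhs => rw [split_eq w h]
  simp; omega

lemma getD_left {w : List ℕ} (h : w ≠ []) {r : ℕ} (hr : r < (lT w).length) :
    w.getD r 0 = (lT w).getD r 0 := by
  conv_lhs => rw [split_eq w h]
  rw [List.getD_append _ _ _ _ hr]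

lemma getD_mid {w : List ℕ} (h : w ≠ []) :
    w.getD (lT w).length 0 = w.max?.getD 0 := by
  set M := w.max?.getD 0 with hM
  set t := (lT w).length with ht
  conv_lhs => rw [split_eq w h]
  rw [List.getD_append_right _ _ _ _ (ht ▸ le_refl t)]
  simp [ht, hM]

lemma getD_right {w : List ℕ} (h : w ≠ []) {r : ℕ} (hr1 : (lT w).length < r)
    (hr2 : r < w.length) : w.getD r 0 = (lD w).getD (r - (lT w).length - 1) 0 := by
  conv_lhs => rw [split_eq w h]
  rw [List.getD_append_right _ _ _ _ (by omega : (lT w).length ≤ r)]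
  have heq : r - (lT w).length = (r - (lT w).length - 1) + 1 := by omega
  conv_lhs => rw [heq, List.getD_cons_succ]

lemma getD_mem {w : List ℕ} {r : ℕ} (hr : r < w.length) : w.getD r 0 ∈ w := by
  rw [List.getD_eq_getElem _ _ hr]; exact List.getElem_mem _

lemma getD_lt_maxD {w : List ℕ} (h : w ≠ []) (hnd : w.Nodup) {r : ℕ} (hr : r < w.length)
    (hne : r ≠ (lT w).length) : w.getD r 0 < w.max?.getD 0 := by
  have h1 : w.getD r 0 ≤ w.max?.getD 0 := le_maxD (getD_mem hr)
  rcases h1.lt_or_eq with h2 | h2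
  · exact h2
  · exfalso
    apply hne
    have h3 : w[r] = w.max?.getD 0 := by rw [← List.getD_eq_getElem _ _ hr, h2]
    have h4 := List.Nodup.idxOf_getElem hnd r hr
    rw [h3, idx_maxD h] at h4
    omega

lemma anc_shape : ∀ (w w' : List ℕ), w.Nodup → w'.Nodup → shape w = shape w' →
    ∀ p q, p < w.length → q < w.length → Anc w p q → Anc w' p q := by
  intro w w' hnd hnd' hsh p q hp hq hanc
  have hlen : w.length = w'.length := by rw [← size_shape w, ← size_shape w', hsh]
  have h : w ≠ [] := by
    intro hc; subst hc; simp at hp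
  have h' : w' ≠ [] := fun hc =>
    h (List.length_eq_zero_iff.mp (by rw [hc] at hlen; simpa using hlen))
  rw [shape_eq w h, shape_eq w' h'] at hsh
  rw [BT.node.injEq] at hsh
  have ht : (lT w).length = (lT w').length := by
    rw [← size_shape (lT w), ← size_shape (lT w'), hsh.1]
  set t := (lT w).length with htdef
  have hlsp := length_split w h
  have hlsp' := length_split w' h'
  by_cases hpt : p = t
  · -- p is the max position: Anc always true
    intro r h1 h2
    subst hpt
    rw [ht, getD_mid h']
    exact le_maxD (getD_mem (by omega))
  · by_cases hbetween : min p q ≤ t ∧ t ≤ max p q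
    · -- t strictly inside: Anc w p q is false
      exfalso
      have h1 := hanc t hbetween.1 hbetween.2
      rw [getD_mid h] at h1
      have h2 := getD_lt_maxD h hnd hp hpt
      omega
    · push_neg at hbetween
      by_cases hside : max p q < t
      · -- both on the left
        have hp' : p < t := by omega
        have hq' : q < t := by omega
        have hancT : Anc (lT w) p q := by
          intro r h1 h2
          rw [← getD_left h (by omega), ← getD_left h hp']
          exact hanc r h1 h2
        have ih := anc_shape (lT w) (lT w') ((lT_sublist w).nodup hnd)
          ((lT_sublist w').nodup hnd') hsh.1 p q hp' hq' hancT
        intro r h1 h2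
        rw [getD_left h' (by omega), getD_left h' (by omega)]
        exact ih r h1 h2
      · -- both on the right
        have hp' : t < p := by omega
        have hq' : t < q := by omega
        have hancD : Anc (lD w) (p - t - 1) (q - t - 1) := by
          intro r h1 h2
          have hr : r + t + 1 < w.length := by omega
          have e1 := getD_right h (by omega : t < r + t + 1) hr
          have e2 := getD_right h hp' hp
          simp only [htdef] at e1 e2
          rw [show r + t + 1 - (lT w).length - 1 = r by omega] at e1
          rw [← e1, ← e2]
          exact hanc (r + t + 1) (by omega) (by omega)
        have ih := anc_shape (lD w) (lD w') ((lD_sublist w).nodup hnd)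
          ((lD_sublist w').nodup hnd') hsh.2 (p - t - 1) (q - t - 1)
          (by omega) (by omega) hancD
        intro r h1 h2
        have hr' : r < w'.length := by omega
        have hrt : t < r := by omega
        have e1 := getD_right h' (ht ▸ hrt) hr'
        have e2 := getD_right h' (ht ▸ hp') (by omega)
        rw [← ht] at e1 e2
        rw [e1, e2]
        exact ih (r - t - 1) (by omega) (by omega)
termination_by w _ => w.length
decreasing_by exacts [lT_length_lt _ h, lD_length_lt _ h]

end PU
namespace PU

lemma indexOf_map {f : ℕ → ℕ} (hf : Function.Injective f) :
    ∀ (l : List ℕ) (a : ℕ), (l.map f).idxOf (f a) = l.idxOf a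
  | [], _ => rfl
  | b :: t, a => by
    by_cases hba : b = a
    · subst hba; rw [List.map_cons, List.idxOf_cons_self, List.idxOf_cons_self]
    · rw [List.map_cons, List.idxOf_cons_ne _ (fun hc => hba (hf hc)),
        List.idxOf_cons_ne _ hba, indexOf_map hf t a]

lemma getD_map (f : ℕ → ℕ) {l : List ℕ} {r : ℕ} (hr : r < l.length) :
    (l.map f).getD r 0 = f (l.getD r 0) := by
  rw [List.getD_eq_getElem _ _ (by simpa using hr), List.getD_eq_getElem _ _ hr,
    List.getElem_map]

lemma idx_getD {w : List ℕ} (hnd : w.Nodup) {r : ℕ} (hr : r < w.length) :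
    w.idxOf (w.getD r 0) = r := by
  rw [List.getD_eq_getElem _ _ hr]
  exact List.Nodup.idxOf_getElem hnd r hr

lemma getD_idx {w : List ℕ} {a : ℕ} (ha : a ∈ w) :
    w.getD (w.idxOf a) 0 = a := by
  rw [List.getD_eq_getElem _ _ (List.idxOf_lt_length_iff.mpr ha)]
  exact List.getElem_idxOf _

lemma lower_entry {n : ℕ} (m : List ℕ) (hm : IsPermList n m) (k : ℕ) (hk : k < n) :
    ∀ (d : ℕ) (w : List ℕ), IsPermList n w → shape w = shape m →
    (∀ j, 1 ≤ j → j ≤ k → w.idxOf j = m.idxOf j) →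
    w.getD (m.idxOf (k+1)) 0 = (k+1) + d →
    ∃ w', OrbitRel n w w' ∧ IsPermList n w' ∧ shape w' = shape m ∧
      (∀ j, 1 ≤ j → j ≤ k → w'.idxOf j = m.idxOf j) ∧
      w'.getD (m.idxOf (k+1)) 0 = k+1
  | 0, w, hw, hsh, hagree, hu => ⟨w, Relation.EqvGen.refl w, hw, hsh, hagree, hu⟩
  | d+1, w, hw, hsh, hagree, hu => by
    have hmn : m.length = n := length_of_perm hm
    have hwn : w.length = n := length_of_perm hw
    have hndw : w.Nodup := nodup_of_perm hw
    have hndm : m.Nodup := nodup_of_perm hm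
    set u := m.idxOf (k+1) with hudef
    have hk1m : (k+1) ∈ m := mem_of_perm hm (by omega) (by omega)
    have hu_lt : u < n := hmn ▸ List.idxOf_lt_length_iff.mpr hk1m
    set i := k+1+d with hidef
    have hwu : w.getD u 0 = i+1 := by rw [hu]; omega
    have hi1n : i+1 ≤ n := by
      have := (mem_iff_of_perm hw).mp (getD_mem (by omega : u < w.length))
      omega
    have hi_mem : i ∈ w := mem_of_perm hw (by omega) (by omega)
    have hi1_mem : i+1 ∈ w := mem_of_perm hw (by omega) (by omega)
    have hidx_u : w.idxOf (i+1) = u := by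
      rw [← hwu]; exact idx_getD hndw (by omega)
    set v := w.idxOf i with hvdef
    have hv_lt : v < w.length := List.idxOf_lt_length_iff.mpr hi_mem
    have hwv : w.getD v 0 = i := getD_idx hi_mem
    have hvu : v ≠ u := by
      intro hc
      rw [hc, hwu] at hwv
      omega
    have hta : ToggleApplies i w := by
      by_contra hc
      have hanc : Anc w u v := by
        intro r h1 h2
        rw [hwu]
        by_cases hru : r = u
        · rw [hru, hwu]
        by_cases hrv : r = v
        · rw [hrv, hwv]; omega
        have hr_lt : r < w.length := by omega
        have ha_mem : w.getD r 0 ∈ w := getD_mem hr_lt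
        have hidx_a : w.idxOf (w.getD r 0) = r := idx_getD hndw hr_lt
        by_contra hgt
        exact hc ⟨w.getD r 0, ha_mem, by omega, by rw [hidx_a, ← hvdef, hidx_u]; omega,
          by rw [hidx_a, ← hvdef, hidx_u]; omega⟩
      have hancm : Anc m u v := anc_shape w m hndw hndm hsh u v (by omega) hv_lt hanc
      have hmv := hancm v (min_le_right _ _) (le_max_right _ _)
      have hmu : m.getD u 0 = k+1 := getD_idx hk1m
      have hmv_mem : m.getD v 0 ∈ m := getD_mem (by omega)
      have hmv_b := (mem_iff_of_perm hm).mp hmv_mem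
      have hmv_ne : m.getD v 0 ≠ k+1 := by
        intro hcc
        have := idx_getD hndm (by omega : v < m.length)
        rw [hcc, ← hudef] at this
        exact hvu this.symm
      have hmv_le : m.getD v 0 ≤ k := by omega
      have hag := hagree (m.getD v 0) (by omega) hmv_le
      have hthis : w.idxOf (m.getD v 0) = v := by
        rw [hag]; exact idx_getD hndm (by omega)
      have hx : w.getD (w.idxOf (m.getD v 0)) 0 = m.getD v 0 :=
        getD_idx (mem_of_perm hw (by omega) (by omega))
      rw [hthis, hwv] at hx
      omega
    have hstep : ToggleStep n w (swapEntries i w) :=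
      ⟨i, by omega, by omega, by rw [toggle, if_pos hta]⟩
    have hw₂ : IsPermList n (swapEntries i w) := isPerm_swap (by omega) hi1n hw
    have hsh₂ : shape (swapEntries i w) = shape m :=
      (shape_swapEntries hndw hi_mem hi1_mem hta).trans hsh
    have hagree₂ : ∀ j, 1 ≤ j → j ≤ k → (swapEntries i w).idxOf j = m.idxOf j := by
      intro j h1 h2
      have hj : sfun i j = j := by simp only [sfun]; split_ifs <;> omega
      conv_lhs => rw [swapEntries_eq_map, ← hj]
      rw [indexOf_map (sfun_inj i)]
      exact hagree j h1 h2
    have hu₂ : (swapEntries i w).getD u 0 = (k+1) + d := by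
      rw [swapEntries_eq_map, getD_map _ (by omega : u < w.length), hwu]
      simp only [sfun]; split_ifs <;> omega
    obtain ⟨w', ho, hw', hsh', hag', hu'⟩ :=
      lower_entry m hm k hk d (swapEntries i w) hw₂ hsh₂ hagree₂ hu₂
    exact ⟨w', Relation.EqvGen.trans _ _ _ (Relation.EqvGen.rel _ _ hstep) ho,
      hw', hsh', hag', hu'⟩

lemma eq_of_indexOf_agree {n : ℕ} {w m : List ℕ} (hw : IsPermList n w) (hm : IsPermList n m)
    (hag : ∀ j, 1 ≤ j → j ≤ n → w.idxOf j = m.idxOf j) : w = m := by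
  have hwn : w.length = n := length_of_perm hw
  have hmn : m.length = n := length_of_perm hm
  apply List.ext_getElem (by omega)
  intro p h1 h2
  have hmem : w[p] ∈ w := List.getElem_mem _
  have hb := (mem_iff_of_perm hw).mp hmem
  have e1 : w.idxOf w[p] = p := List.Nodup.idxOf_getElem (nodup_of_perm hw) p h1
  have e2 : m.idxOf w[p] = p := by rw [← hag _ hb.1 hb.2]; exact e1
  have e3 : m.getD (m.idxOf w[p]) 0 = w[p] :=
    getD_idx ((mem_iff_of_perm hm).mpr hb)
  rw [e2, List.getD_eq_getElem _ _ h2] at e3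
  exact e3.symm

lemma orbit_of_shape {n : ℕ} {l m : List ℕ} (hl : IsPermList n l) (hm : IsPermList n m)
    (hs : shape l = shape m) : OrbitRel n l m := by
  have key : ∀ k, k ≤ n → ∃ w, OrbitRel n l w ∧ IsPermList n w ∧ shape w = shape m ∧
      ∀ j, 1 ≤ j → j ≤ k → w.idxOf j = m.idxOf j := by
    intro k
    induction k with
    | zero => exact fun _ => ⟨l, Relation.EqvGen.refl l, hl, hs, fun j h1 h2 => by omega⟩
    | succ k ih =>
      intro hk1
      obtain ⟨w, ho, hw, hsh, hag⟩ := ih (by omega)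
      have hmn : m.length = n := length_of_perm hm
      have hwn : w.length = n := length_of_perm hw
      set u := m.idxOf (k+1) with hudef
      have hk1m : (k+1) ∈ m := mem_of_perm hm (by omega) (by omega)
      have hu_lt : u < n := hmn ▸ List.idxOf_lt_length_iff.mpr hk1m
      have hwu_mem : w.getD u 0 ∈ w := getD_mem (by omega)
      have hwu_b := (mem_iff_of_perm hw).mp hwu_mem
      have hge : k+1 ≤ w.getD u 0 := by
        by_contra hlt
        have e1 : w.idxOf (w.getD u 0) = u := idx_getD (nodup_of_perm hw) (by omega)
        have e2 := hag (w.getD u 0) (by omega) (by omega)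
        rw [e2] at e1
        have e3 : m.getD (m.idxOf (w.getD u 0)) 0 = w.getD u 0 :=
          getD_idx ((mem_iff_of_perm hm).mpr hwu_b)
        rw [e1] at e3
        have e4 : m.getD u 0 = k+1 := getD_idx hk1m
        omega
      obtain ⟨w', ho', hw', hsh', hag', hu'⟩ :=
        lower_entry m hm k (by omega) (w.getD u 0 - (k+1)) w hw hsh hag (by rw [← hudef]; omega)
      refine ⟨w', Relation.EqvGen.trans _ _ _ ho ho', hw', hsh', fun j h1 h2 => ?_⟩
      rcases Nat.lt_or_ge j (k+1) with hj | hj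
      · exact hag' j h1 (by omega)
      · have hj' : j = k+1 := by omega
        subst hj'
        rw [← hudef, ← hu']
        exact idx_getD (nodup_of_perm hw') (by rw [length_of_perm hw']; omega)
  obtain ⟨w, ho, hw, hsh, hag⟩ := key n le_rfl
  rwa [eq_of_indexOf_agree hw hm hag] at ho

end PU
/-- Two permutations in `Sₙ` have the same skeleton (i.e. `π⁻¹ · s(π) = σ⁻¹ · s(σ)`)
if and only if they lie in the same orbit of the polyurethane group `𝒫ₙ`. -/
theorem sameSkeleton_iff_sameOrbit (n : ℕ) (l m : List ℕ)
    (hl : IsPermList n l) (hm : IsPermList n m) :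
    skel l = skel m ↔ OrbitRel n l m := by
  constructor
  · intro h
    exact PU.orbit_of_shape hl hm ((PU.skel_eq_iff_shape_eq hl hm).mp h)
  · intro h
    exact (PU.skel_eq_iff_shape_eq hl hm).mpr ((PU.orbit_perm_shape h).2 hl)
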